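/- (Recursive identification step, first row) Let a fully-connected layered feed-forward network of depth L with one source and one sink have activation f(x) = e^x − 1, and let W, W̃ ∈ W_o be weight families whose measured functions satisfy F_W = F_{W̃}. Fix l ∈ {1,…,L} and j ∈ N^{l−1}. If w^l_{1j'} = w̃^l_{1j'} for all j' < j, and w^{l−1}_{j'k} = w̃^{l−1}_{j'k} for all j' ≤ j and all k ∈ N^{l−2}, and w^{l'}_{kk'} = w̃^{l'}_{kk'} for all l' < l−1 and all k, k', then w^l_{1j} = w̃^l_{1j}. -/

import Mathlib

open Finset Filter

/-- Node outputs of the fully-connected layered feed-forward network with activation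
`f x = e^x - 1` and layer sizes `n 0, …, n L`: `expOut n w 0 i x = x` (the source) and
`expOut n w (l+1) i x = exp (∑_{j < n l} w^{l+1}_{ij} · expOut n w l j x) - 1`, where
`w (l+1) i j` is the weight of the edge from node `j` of layer `l` to node `i` of layer
`l + 1` (nodes are numbered `0, …, n l - 1`; the "first" node of a layer is node `0`). -/
noncomputable def expOut (n : ℕ → ℕ) (w : ℕ → ℕ → ℕ → ℝ) : ℕ → ℕ → ℝ → ℝ
  | 0, _, x => x
  | l + 1, i, x =>
      Real.exp (∑ j ∈ Finset.range (n l), w (l + 1) i j * expOut n w l j x) - 1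

/-- The class `W_o` of weight families: all weights are positive and, in each layer and for
each source node `j`, the weights are strictly decreasing in the destination node index
(`w^l_{1j} > w^l_{2j} > … > w^l_{n_l j}` in 1-based notation). -/
def Wo (L : ℕ) (n : ℕ → ℕ) (w : ℕ → ℕ → ℕ → ℝ) : Prop :=
  (∀ l < L, ∀ i < n (l + 1), ∀ j < n l, 0 < w (l + 1) i j) ∧
  (∀ l < L, ∀ j < n l, ∀ i i' : ℕ, i < i' → i' < n (l + 1) → w (l + 1) i' j < w (l + 1) i j)


lemma sum_mul_tendsto_atTop {p : ℕ} (hp : 0 < p) (c : ℕ → ℝ) (hc : ∀ k < p, 0 < c k)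
    (F : ℕ → ℝ → ℝ) (hF : ∀ k < p, Tendsto (F k) atTop atTop) :
    Tendsto (fun x => ∑ k ∈ Finset.range p, c k * F k x) atTop atTop := by
  have h0 : Tendsto (fun x => c 0 * F 0 x) atTop atTop :=
    (hF 0 hp).const_mul_atTop (hc 0 hp)
  apply tendsto_atTop_mono' atTop _ h0
  have hev : ∀ᶠ x in atTop, ∀ k ∈ Finset.range p, 0 ≤ F k x := by
    rw [eventually_all_finset]
    intro k hk
    exact (hF k (Finset.mem_range.mp hk)).eventually_ge_atTop 0
  filter_upwards [hev] with x hx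
  refine Finset.single_le_sum (f := fun k => c k * F k x) ?_ (Finset.mem_range.mpr hp)
  intro k hk
  exact mul_nonneg (hc k (Finset.mem_range.mp hk)).le (hx k hk)

lemma expOut_tendsto (L : ℕ) (n : ℕ → ℕ) (hpos : ∀ l ≤ L, 0 < n l)
    (w : ℕ → ℕ → ℕ → ℝ) (hw1 : ∀ l < L, ∀ i < n (l+1), ∀ j < n l, 0 < w (l+1) i j) :
    ∀ m ≤ L, ∀ i < n m, Tendsto (fun x => expOut n w m i x) atTop atTop := by
  intro m
  induction m with
  | zero => intro _ _ _; exact tendsto_id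
  | succ p ih =>
    intro hm i hi
    have hpL : p < L := Nat.lt_of_succ_le hm
    have hS : Tendsto (fun x => ∑ k ∈ Finset.range (n p),
        w (p+1) i k * expOut n w p k x) atTop atTop :=
      sum_mul_tendsto_atTop (hpos p hpL.le) _ (fun k hk => hw1 p hpL i hi k hk) _
        (fun k hk => ih hpL.le k hk)
    have h2 := tendsto_atTop_add_const_right atTop (-1) (Real.tendsto_exp_atTop.comp hS)
    simpa [expOut, Function.comp, sub_eq_add_neg] using h2

lemma expOut_ratio (L : ℕ) (n : ℕ → ℕ) (hpos : ∀ l ≤ L, 0 < n l)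
    (w : ℕ → ℕ → ℕ → ℝ) (hw : Wo L n w) (p : ℕ) (hp : p + 1 ≤ L)
    (i i' : ℕ) (hii : i < i') (hi' : i' < n (p+1)) :
    Tendsto (fun x => expOut n w (p+1) i' x / expOut n w (p+1) i x) atTop (nhds 0) := by
  have hpL : p < L := Nat.lt_of_succ_le hp
  have hi : i < n (p+1) := lt_trans hii hi'
  set S : ℝ → ℝ := fun x => ∑ k ∈ Finset.range (n p), w (p+1) i k * expOut n w p k x with hSdef
  set S' : ℝ → ℝ := fun x => ∑ k ∈ Finset.range (n p), w (p+1) i' k * expOut n w p k x with hS'def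
  have hFt : ∀ k < n p, Tendsto (fun x => expOut n w p k x) atTop atTop :=
    fun k hk => expOut_tendsto L n hpos w hw.1 p hpL.le k hk
  have hS : Tendsto S atTop atTop :=
    sum_mul_tendsto_atTop (hpos p hpL.le) _ (fun k hk => hw.1 p hpL i hi k hk) _ hFt
  have hD : Tendsto (fun x => S x - S' x) atTop atTop := by
    have heq : (fun x => S x - S' x) = fun x =>
        ∑ k ∈ Finset.range (n p), (w (p+1) i k - w (p+1) i' k) * expOut n w p k x := by
      funext x
      simp [hSdef, hS'def, ← Finset.sum_sub_distrib, sub_mul]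
    rw [heq]
    exact sum_mul_tendsto_atTop (hpos p hpL.le) _
      (fun k hk => sub_pos.mpr (hw.2 p hpL k hk i i' hii hi')) _ hFt
  have hub : Tendsto (fun x => 2 * Real.exp (S' x - S x)) atTop (nhds 0) := by
    have hneg : Tendsto (fun x => S' x - S x) atTop atBot := by
      have h := tendsto_neg_atTop_atBot.comp hD
      have heq : (Neg.neg ∘ fun x => S x - S' x) = fun x => S' x - S x := by
        funext x; simp [neg_sub]
      rwa [heq] at h
    have := (Real.tendsto_exp_atBot.comp hneg).const_mul (2:ℝ)
    simpa using this
  have hnum := expOut_tendsto L n hpos w hw.1 (p+1) hp i' hi'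
  apply tendsto_of_tendsto_of_tendsto_of_le_of_le' tendsto_const_nhds hub
  · -- eventually 0 ≤ ratio
    filter_upwards [hS.eventually_ge_atTop 1, hnum.eventually_ge_atTop 0] with x h1 h2
    have hden : (0:ℝ) < Real.exp (S x) - 1 := by
      have : (1:ℝ) < Real.exp (S x) := by
        calc (1:ℝ) < Real.exp 1 := by
              have := Real.exp_one_gt_d9; linarith
          _ ≤ Real.exp (S x) := Real.exp_le_exp.mpr h1
      linarith
    have hnum0 : (0:ℝ) ≤ expOut n w (p+1) i' x := h2
    have : expOut n w (p+1) i' x / expOut n w (p+1) i x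
        = expOut n w (p+1) i' x / (Real.exp (S x) - 1) := by
      simp [expOut, hSdef]
    rw [this]
    exact div_nonneg hnum0 hden.le
  · -- eventually ratio ≤ 2 exp(S' - S)
    filter_upwards [hS.eventually_ge_atTop 1] with x h1
    have hexpS : (2:ℝ) ≤ Real.exp (S x) := by
      calc (2:ℝ) ≤ Real.exp 1 := by have := Real.add_one_le_exp (1:ℝ); linarith
        _ ≤ Real.exp (S x) := Real.exp_le_exp.mpr h1
    have hden : (0:ℝ) < Real.exp (S x) - 1 := by linarith
    have hrw : expOut n w (p+1) i' x / expOut n w (p+1) i x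
        = (Real.exp (S' x) - 1) / (Real.exp (S x) - 1) := by
      simp [expOut, hSdef, hS'def]
    rw [hrw, Real.exp_sub]
    rw [mul_div_assoc', div_le_div_iff₀ hden (Real.exp_pos (S x))]
    have h2 : (0:ℝ) ≤ (Real.exp (S x) - 2) * Real.exp (S' x) :=
      mul_nonneg (by linarith) (Real.exp_pos (S' x)).le
    have h3 := Real.exp_pos (S x)
    nlinarith

lemma expOut_congr (n : ℕ → ℕ) (w w' : ℕ → ℕ → ℕ → ℝ) :
    ∀ m : ℕ, (∀ l', 1 ≤ l' → l' ≤ m → ∀ i < n l', ∀ k < n (l'-1), w l' i k = w' l' i k) →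
    ∀ i < n m, ∀ x : ℝ, expOut n w m i x = expOut n w' m i x := by
  intro m
  induction m with
  | zero => intro _ _ _ _; rfl
  | succ q ih =>
    intro h i hi x
    simp only [expOut]
    congr 2
    apply Finset.sum_congr rfl
    intro k hk
    have hk' : k < n q := Finset.mem_range.mp hk
    rw [h (q+1) (Nat.succ_le_succ (Nat.zero_le q)) le_rfl i hi k (by simpa using hk'),
      ih (fun l' h1 h2 => h l' h1 (h2.trans (Nat.le_succ q))) k hk' x]

lemma iterlog_asymp (L : ℕ) (n : ℕ → ℕ) (hpos : ∀ l ≤ L, 0 < n l)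
    (w : ℕ → ℕ → ℕ → ℝ) (hw : Wo L n w) :
    ∀ d m : ℕ, 1 ≤ m → m + d = L →
    ∃ c : ℝ, Tendsto (fun x => Real.log^[d] (Real.log (expOut n w L 0 x + 1)) -
      ∑ k ∈ Finset.range (n (m-1)), w m 0 k * expOut n w (m-1) k x) atTop (nhds c) := by
  intro d
  induction d with
  | zero =>
    intro m hm hdm
    obtain ⟨p, rfl⟩ : ∃ p, m = p + 1 := ⟨m - 1, (Nat.succ_pred_eq_of_pos hm).symm⟩
    subst hdm
    refine ⟨0, ?_⟩
    have heq : (fun x => Real.log^[0] (Real.log (expOut n w (p+1+0) 0 x + 1)) -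
        ∑ k ∈ Finset.range (n (p+1-1)), w (p+1) 0 k * expOut n w (p+1-1) k x)
        = fun _ => (0:ℝ) := by
      funext x
      simp [expOut, Real.log_exp]
    rw [heq]
    exact tendsto_const_nhds
  | succ d ih =>
    intro m hm hdm
    obtain ⟨c, hc⟩ := ih (m+1) (by omega) (by omega)
    obtain ⟨p, rfl⟩ : ∃ p, m = p + 1 := ⟨m - 1, (Nat.succ_pred_eq_of_pos hm).symm⟩
    simp only [Nat.add_sub_cancel] at hc ⊢
    have hpL : p < L := by omega
    have hp1L : p + 1 < L := by omega
    set g : ℝ → ℝ := fun x => Real.log^[d] (Real.log (expOut n w L 0 x + 1)) with hgdef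
    set S₁ : ℝ → ℝ := fun x => ∑ k ∈ Finset.range (n p), w (p+1) 0 k * expOut n w p k x
      with hS1def
    have hS1 : Tendsto S₁ atTop atTop :=
      sum_mul_tendsto_atTop (hpos p hpL.le) _
        (fun k hk => hw.1 p hpL 0 (hpos (p+1) hpL) k hk) _
        (fun k hk => expOut_tendsto L n hpos w hw.1 p hpL.le k hk)
    have hEinv : Tendsto (fun x => (Real.exp (S₁ x))⁻¹) atTop (nhds 0) :=
      (Real.tendsto_exp_atTop.comp hS1).inv_tendsto_atTop
    have hexp0 : ∀ x, expOut n w (p+1) 0 x = Real.exp (S₁ x) - 1 := by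
      intro x; simp [expOut, hS1def]
    set w₀ : ℝ := w (p+1+1) 0 0 with hw0def
    have hw0pos : 0 < w₀ := hw.1 (p+1) hp1L 0 (hpos (p+2) hp1L) 0 (hpos (p+1) hpL)
    -- term-by-term limits for the sum S₂ / exp S₁
    have hterm : ∀ k ∈ Finset.range (n (p+1)),
        Tendsto (fun x => w (p+1+1) 0 k * expOut n w (p+1) k x / Real.exp (S₁ x)) atTop
          (nhds (if k = 0 then w₀ else 0)) := by
      intro k hk
      have hkn : k < n (p+1) := Finset.mem_range.mp hk
      rcases Nat.eq_zero_or_pos k with rfl | hkpos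
      · simp only [if_pos rfl]
        have hlim : Tendsto (fun x => w₀ * (1 - Real.exp (-S₁ x))) atTop (nhds w₀) := by
          have hneg : Tendsto (fun x => Real.exp (-S₁ x)) atTop (nhds 0) :=
            Real.tendsto_exp_atBot.comp (tendsto_neg_atTop_atBot.comp hS1)
          have := (tendsto_const_nhds (x := (1:ℝ)) (f := atTop)).sub hneg
          have h2 := (tendsto_const_nhds (x := w₀) (f := atTop)).mul this
          simpa using h2
        refine hlim.congr fun x => ?_
        rw [hexp0 x, Real.exp_neg]
        have he := Real.exp_pos (S₁ x)
        field_simp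
        rw [hw0def]; ring
      · simp only [if_neg (Nat.pos_iff_ne_zero.mp hkpos)]
        have hwk : 0 < w (p+1+1) 0 k := hw.1 (p+1) hp1L 0 (hpos (p+2) hp1L) k hkn
        have hratio := expOut_ratio L n hpos w hw p hp1L.le 0 k hkpos hkn
        have hub : Tendsto (fun x => w (p+1+1) 0 k *
            (expOut n w (p+1) k x / expOut n w (p+1) 0 x)) atTop (nhds 0) := by
          have := hratio.const_mul (w (p+1+1) 0 k); simpa using this
        have hF0 := expOut_tendsto L n hpos w hw.1 (p+1) hp1L.le 0 (hpos (p+1) hpL)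
        have hFk := expOut_tendsto L n hpos w hw.1 (p+1) hp1L.le k hkn
        apply tendsto_of_tendsto_of_tendsto_of_le_of_le' tendsto_const_nhds hub
        · filter_upwards [hFk.eventually_ge_atTop 0] with x hx
          exact div_nonneg (mul_nonneg hwk.le hx) (Real.exp_pos _).le
        · filter_upwards [hFk.eventually_ge_atTop 0, hF0.eventually_ge_atTop 1] with x hx h0
          rw [mul_div_assoc]
          refine mul_le_mul_of_nonneg_left ?_ hwk.le
          apply div_le_div_of_nonneg_left hx (by linarith)
          rw [hexp0] at h0 ⊢
          linarith
    have hT2 : Tendsto (fun x => ∑ k ∈ Finset.range (n (p+1)),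
        w (p+1+1) 0 k * expOut n w (p+1) k x / Real.exp (S₁ x)) atTop (nhds w₀) := by
      have h := tendsto_finset_sum (Finset.range (n (p+1))) hterm
      have hsum : (∑ k ∈ Finset.range (n (p+1)), if k = 0 then w₀ else 0) = w₀ := by
        rw [Finset.sum_ite_eq' (Finset.range (n (p+1))) 0 (fun _ => w₀)]
        exact if_pos (Finset.mem_range.mpr (hpos (p+1) hpL))
      rwa [hsum] at h
    have hT1 : Tendsto (fun x => (g x - ∑ k ∈ Finset.range (n (p+1)),
        w (p+1+1) 0 k * expOut n w (p+1) k x) * (Real.exp (S₁ x))⁻¹) atTop (nhds 0) := by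
      have := hc.mul hEinv; simpa using this
    have hmain : Tendsto (fun x => g x / Real.exp (S₁ x)) atTop (nhds w₀) := by
      have h := hT1.add hT2
      rw [zero_add] at h
      refine h.congr fun x => ?_
      rw [← Finset.sum_div]
      have he := Real.exp_ne_zero (S₁ x)
      field_simp
      ring
    have hgpos : ∀ᶠ x in atTop, 0 < g x := by
      have hev := hmain (Ioi_mem_nhds hw0pos)
      filter_upwards [hev] with x hx
      have : 0 < g x / Real.exp (S₁ x) := hx
      by_contra hle
      push_neg at hle
      have : g x / Real.exp (S₁ x) ≤ 0 := div_nonpos_of_nonpos_of_nonneg hle (Real.exp_pos _).le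
      linarith
    refine ⟨Real.log w₀, ?_⟩
    have hlog := hmain.log (ne_of_gt hw0pos)
    refine hlog.congr' ?_
    filter_upwards [hgpos] with x hx
    rw [Real.log_div (ne_of_gt hx) (Real.exp_ne_zero _), Real.log_exp,
      Function.iterate_succ_apply']

/-- **(Recursive identification step, first row, eq. rec_cond1).** Let a fully-connected
layered feed-forward network of depth `L ≥ 1` with one source and one sink have activation
`f x = e^x - 1`, and let `W, W̃ ∈ W_o` have the same measured function. Fix a layer
`l ∈ {1, …, L}` and a node `j` of layer `l - 1`. If the first-row weights `w^l_{1 j'}`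
agree for all `j' < j`, the weights `w^{l-1}_{j' k}` agree for all `j' ≤ j` and all
`k ∈ N^{l-2}`, and all weights of layers `l' < l - 1` agree, then `w^l_{1 j} = w̃^l_{1 j}`.
(Nodes are 0-indexed, so the first row is `i = 0`.) -/
theorem stmt_14 (L : ℕ) (hL : 1 ≤ L) (n : ℕ → ℕ) (hn0 : n 0 = 1) (hnL : n L = 1)
    (hpos : ∀ l ≤ L, 0 < n l)
    (w w' : ℕ → ℕ → ℕ → ℝ) (hw : Wo L n w) (hw' : Wo L n w')
    (hF : ∀ x : ℝ, expOut n w L 0 x = expOut n w' L 0 x)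
    (l : ℕ) (hl1 : 1 ≤ l) (hlL : l ≤ L) (j : ℕ) (hj : j < n (l - 1))
    (h1 : ∀ j' < j, w l 0 j' = w' l 0 j')
    (h2 : 2 ≤ l → ∀ j' ≤ j, ∀ k < n (l - 2), w (l - 1) j' k = w' (l - 1) j' k)
    (h3 : ∀ l', 1 ≤ l' → l' + 1 < l → ∀ k < n l', ∀ k' < n (l' - 1),
      w l' k k' = w' l' k k') :
    w l 0 j = w' l 0 j := by
  -- equality of lower-layer outputs up to node j
  have heq : ∀ k ≤ j, ∀ x : ℝ, expOut n w (l-1) k x = expOut n w' (l-1) k x := by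
    intro k hk x
    rcases Nat.lt_or_ge l 2 with hl2 | hl2
    · have : l = 1 := by omega
      subst this
      rfl
    · obtain ⟨q, rfl⟩ : ∃ q, l = q + 2 := ⟨l - 2, by omega⟩
      have hql : q + 2 - 1 = q + 1 := rfl
      rw [hql]
      simp only [expOut]
      congr 2
      apply Finset.sum_congr rfl
      intro k' hk'
      have hk'n : k' < n q := Finset.mem_range.mp hk'
      have hw12 := h2 (by omega) k hk k' (by simpa using hk'n)
      rw [show q + 2 - 1 = q + 1 from rfl] at hw12
      rw [hw12]
      congr 1
      exact expOut_congr n w w' q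
        (fun l' hl'1 hl'q i hi k'' hk'' => h3 l' hl'1 (by omega) i hi k'' hk'') k' hk'n x
  -- iterated log asymptotics for both networks
  obtain ⟨c, hc⟩ := iterlog_asymp L n hpos w hw (L - l) l hl1 (by omega)
  obtain ⟨c', hc'⟩ := iterlog_asymp L n hpos w' hw' (L - l) l hl1 (by omega)
  have hc'2 : Tendsto (fun x => Real.log^[L-l] (Real.log (expOut n w L 0 x + 1)) -
      ∑ k ∈ Finset.range (n (l-1)), w' l 0 k * expOut n w' (l-1) k x) atTop (nhds c') :=
    hc'.congr fun x => by rw [hF]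
  have hdiff : Tendsto (fun x =>
      ∑ k ∈ Finset.range (n (l-1)), w l 0 k * expOut n w (l-1) k x -
      ∑ k ∈ Finset.range (n (l-1)), w' l 0 k * expOut n w' (l-1) k x) atTop
      (nhds (c' - c)) := by
    have h := hc'2.sub hc
    exact h.congr fun x => by ring
  set Fj : ℝ → ℝ := fun x => expOut n w (l-1) j x with hFjdef
  have hFj : Tendsto Fj atTop atTop :=
    expOut_tendsto L n hpos w hw.1 (l-1) (by omega) j hj
  set N := n (l-1) with hNdef
  -- pointwise split of the difference
  have hsplit : ∀ x : ℝ,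
      (∑ k ∈ Finset.range N, w l 0 k * expOut n w (l-1) k x -
       ∑ k ∈ Finset.range N, w' l 0 k * expOut n w' (l-1) k x)
      = (w l 0 j - w' l 0 j) * Fj x +
        ∑ k ∈ Finset.Ico (j+1) N, (w l 0 k * expOut n w (l-1) k x -
          w' l 0 k * expOut n w' (l-1) k x) := by
    intro x
    rw [← Finset.sum_sub_distrib]
    rw [← Finset.sum_range_add_sum_Ico _ (show j+1 ≤ N by omega)]
    rw [Finset.sum_range_succ]
    have h0 : (∑ k ∈ Finset.range j, (w l 0 k * expOut n w (l-1) k x -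
        w' l 0 k * expOut n w' (l-1) k x)) = 0 := by
      apply Finset.sum_eq_zero
      intro k hk
      rw [h1 k (Finset.mem_range.mp hk), heq k (le_of_lt (Finset.mem_range.mp hk)) x]
      ring
    rw [h0, show expOut n w' (l-1) j x = Fj x from (heq j le_rfl x).symm]
    ring
  -- tail terms tend to zero after division by Fj
  have htailterm : ∀ k, j < k → k < N →
      Tendsto (fun x => (w l 0 k * expOut n w (l-1) k x -
        w' l 0 k * expOut n w' (l-1) k x) / Fj x) atTop (nhds 0) := by
    intro k hjk hkN
    have hl2 : 2 ≤ l := by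
      by_contra hcon
      have : l = 1 := by omega
      subst this
      rw [hNdef] at hkN
      rw [show (1:ℕ)-1 = 0 from rfl, hn0] at hkN
      omega
    obtain ⟨q, rfl⟩ : ∃ q, l = q + 2 := ⟨l - 2, by omega⟩
    have hql : q + 2 - 1 = q + 1 := rfl
    have hq1L : q + 1 ≤ L := by omega
    have hkN' : k < n (q+1) := hkN
    have r1 := expOut_ratio L n hpos w hw q hq1L j k hjk hkN'
    have r2 := expOut_ratio L n hpos w' hw' q hq1L j k hjk hkN'
    have r2' : Tendsto (fun x => expOut n w' (q+1) k x / Fj x) atTop (nhds 0) := by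
      refine r2.congr fun x => ?_
      show expOut n w' (q+1) k x / expOut n w' (q+1) j x = expOut n w' (q+1) k x / Fj x
      congr 1
      exact (heq j le_rfl x).symm
    have hcomb := (r1.const_mul (w (q+2) 0 k)).sub (r2'.const_mul (w' (q+2) 0 k))
    rw [mul_zero, mul_zero, sub_zero] at hcomb
    refine hcomb.congr fun x => ?_
    show w (q+2) 0 k * (expOut n w (q+1) k x / expOut n w (q+1) j x) -
        w' (q+2) 0 k * (expOut n w' (q+1) k x / expOut n w (q+1) j x) =
        (w (q+2) 0 k * expOut n w (q+1) k x - w' (q+2) 0 k * expOut n w' (q+1) k x) /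
          expOut n w (q+1) j x
    rw [sub_div, mul_div_assoc, mul_div_assoc]
  have htail : Tendsto (fun x => ∑ k ∈ Finset.Ico (j+1) N,
      (w l 0 k * expOut n w (l-1) k x - w' l 0 k * expOut n w' (l-1) k x) / Fj x) atTop
      (nhds 0) := by
    have h := tendsto_finset_sum (Finset.Ico (j+1) N)
      (fun k hk => htailterm k (Finset.mem_Ico.mp hk).1 (Finset.mem_Ico.mp hk).2)
    simpa using h
  have hquot : Tendsto (fun x =>
      (∑ k ∈ Finset.range N, w l 0 k * expOut n w (l-1) k x -
       ∑ k ∈ Finset.range N, w' l 0 k * expOut n w' (l-1) k x) / Fj x) atTop (nhds 0) := by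
    have h := hdiff.mul hFj.inv_tendsto_atTop
    rw [mul_zero] at h
    exact h.congr fun x => by rw [Pi.inv_apply, ← div_eq_mul_inv]
  have hconst : Tendsto (fun _ : ℝ => w l 0 j - w' l 0 j) atTop (nhds 0) := by
    have h := hquot.sub htail
    rw [sub_zero] at h
    refine h.congr' ?_
    filter_upwards [hFj.eventually_ge_atTop 1] with x hx
    have hne : Fj x ≠ 0 := by linarith
    rw [hsplit x, add_div, mul_div_cancel_right₀ _ hne, Finset.sum_div]
    ring
  have := tendsto_nhds_unique hconst tendsto_const_nhds
  linarith [this]
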